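/- Let Z ⊆ ℝ^d be a zonotope with generator set 𝒢 all of whose extreme points lie in {0,1/2,1}^d, and suppose 𝒢 itself is minimally linearly dependent, with |𝒢| = n. Then Z coincides, up to an affine bijective transformation, with the graphical zonotope Z(C_n) of the cycle on n vertices: there exists an affine map T : ℝ^n → ℝ^d that is injective on Z(C_n) and satisfies T(Z(C_n)) = Z. -/

import Mathlib

open Set Pointwise

noncomputable section

/-- `Z` is a zonotope with generator set `G`: `Z = t + Σ_{g ∈ G} conv{0,g}` for some
translation `t`, where the generators are nonzero and pairwise non-collinear. -/
def IsZonotopeWithGenerators {d : ℕ} (Z : Set (Fin d → ℝ)) (G : Finset (Fin d → ℝ)) : Prop :=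
  (∀ g ∈ G, g ≠ 0) ∧
  (∀ g ∈ G, ∀ h ∈ G, g ≠ h → ∀ r : ℝ, g ≠ r • h) ∧
  ∃ t : Fin d → ℝ,
    Z = {x | ∃ c : (Fin d → ℝ) → ℝ, (∀ g, 0 ≤ c g ∧ c g ≤ 1) ∧ x = t + ∑ g ∈ G, c g • g}

/-- A set is half-integral when all of its extreme points have coordinates in `{0,1/2,1}`. -/
def IsHalfIntegral {d : ℕ} (P : Set (Fin d → ℝ)) : Prop :=
  ∀ x ∈ Set.extremePoints ℝ P, ∀ i, x i = 0 ∨ x i = 1/2 ∨ x i = 1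

/-- A finite set of vectors is minimally linearly dependent when it is linearly dependent
but every proper subset of it is linearly independent. -/
def MinLinDep {d : ℕ} (A : Finset (Fin d → ℝ)) : Prop :=
  ¬ LinearIndependent ℝ (fun x : (A : Set (Fin d → ℝ)) => x.val) ∧
  ∀ B : Finset (Fin d → ℝ), B ⊂ A →
    LinearIndependent ℝ (fun x : (B : Set (Fin d → ℝ)) => x.val)

/-- The cyclic successor on `Fin n`. -/
def cycNext {n : ℕ} (i : Fin n) : Fin n :=
  if h : i.val + 1 < n then ⟨i.val + 1, h⟩ else ⟨0, i.pos⟩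

/-- The graphical zonotope of the cycle on `n` vertices: the Minkowski sum of the
segments `conv{e_i, e_{i+1}}` for `1 ≤ i ≤ n-1` together with `conv{e_n, e_1}`. -/
noncomputable def cycleZonotope (n : ℕ) : Set (Fin n → ℝ) :=
  ∑ i : Fin n, segment ℝ (Pi.single i (1 : ℝ)) (Pi.single (cycNext i) (1 : ℝ))

lemma sep_exists {d : ℕ} (v a : Fin d → ℝ) (h : ∀ r : ℝ, a ≠ r • v) :
    ∃ ν : (Fin d → ℝ) →ₗ[ℝ] ℝ, ν v = 0 ∧ ν a ≠ 0 := by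
  by_cases hv : v = 0
  · subst hv
    have ha : a ≠ 0 := by simpa using h 0
    obtain ⟨i, hi⟩ : ∃ i, a i ≠ 0 := by
      by_contra hc; push_neg at hc; exact ha (funext hc)
    exact ⟨LinearMap.proj i, by simp, by simpa using hi⟩
  · obtain ⟨k, hk⟩ : ∃ k, v k ≠ 0 := by
      by_contra hc; push_neg at hc; exact hv (funext hc)
    have hex : ∃ i, a i * v k - a k * v i ≠ 0 := by
      by_contra hc; push_neg at hc
      apply h (a k / v k)
      funext i
      have h1 := hc i
      have h2 : a i * v k = a k * v i := by linarith
      have : a i = a k / v k * v i := by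
        field_simp
        linarith
      simpa using this
    obtain ⟨i, hi⟩ := hex
    refine ⟨v k • LinearMap.proj i - v i • LinearMap.proj k, by simp [mul_comm], ?_⟩
    simp only [LinearMap.sub_apply, LinearMap.smul_apply, LinearMap.proj_apply, smul_eq_mul]
    intro hcon
    apply hi
    ring_nf
    ring_nf at hcon
    linarith

lemma nonvan_exists {d : ℕ} (v : Fin d → ℝ) (s : Finset (Fin d → ℝ)) :
    (∀ g ∈ s, ∀ r : ℝ, g ≠ r • v) →
    ∃ μ : (Fin d → ℝ) →ₗ[ℝ] ℝ, μ v = 0 ∧ ∀ g ∈ s, μ g ≠ 0 := by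
  classical
  induction s using Finset.induction_on with
  | empty => exact fun _ => ⟨0, by simp, by simp⟩
  | @insert a s' ha ih =>
    intro h
    obtain ⟨μ, hμv, hμ⟩ := ih (fun g hg => h g (Finset.mem_insert_of_mem hg))
    obtain ⟨ν, hνv, hνa⟩ := sep_exists v a (h a (Finset.mem_insert_self a s'))
    obtain ⟨δ, hδ⟩ := Infinite.exists_notMem_finset
      ((insert a s').image (fun g => -(μ g) / (ν g)))
    refine ⟨μ + δ • ν, by simp [hμv, hνv], ?_⟩
    intro g hg
    by_cases hνg : ν g = 0
    · have hga : g ≠ a := by rintro rfl; exact hνa hνg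
      have hgs : g ∈ s' := (Finset.mem_insert.1 hg).resolve_left hga
      simp only [LinearMap.add_apply, LinearMap.smul_apply, hνg, smul_eq_mul, mul_zero, add_zero]
      exact hμ g hgs
    · intro hzero
      apply hδ
      simp only [Finset.mem_image]
      refine ⟨g, hg, ?_⟩
      have hz : μ g + δ * ν g = 0 := by simpa using hzero
      field_simp
      linarith

lemma pert_exists {d : ℕ} (s : Finset (Fin d → ℝ)) (ℓ₀ μ : (Fin d → ℝ) →ₗ[ℝ] ℝ) :
    ∃ ε : ℝ, 0 < ε ∧ ∀ g ∈ s, ℓ₀ g ≠ 0 →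
      ((0 < (ℓ₀ + ε • μ) g ↔ 0 < ℓ₀ g) ∧ (ℓ₀ + ε • μ) g ≠ 0) := by
  classical
  set s' := s.filter (fun g => ℓ₀ g ≠ 0) with hs'
  rcases Finset.eq_empty_or_nonempty s' with he | hne
  · refine ⟨1, one_pos, fun g hg hg0 => absurd ?_ (by simp [he] : g ∉ s')⟩
    simp [hs', Finset.mem_filter, hg, hg0]
  · set ε := s'.inf' hne (fun g => |ℓ₀ g| / (|μ g| + 1)) with hε
    have hεpos : 0 < ε := by
      rw [hε, Finset.lt_inf'_iff]
      intro g hg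
      have : ℓ₀ g ≠ 0 := (Finset.mem_filter.1 hg).2
      positivity
    refine ⟨ε, hεpos, fun g hg hg0 => ?_⟩
    have hgs' : g ∈ s' := Finset.mem_filter.2 ⟨hg, hg0⟩
    have hle : ε ≤ |ℓ₀ g| / (|μ g| + 1) := Finset.inf'_le _ hgs'
    have hlt : |ε * μ g| < |ℓ₀ g| := by
      have h1 : |ε * μ g| = ε * |μ g| := by
        rw [abs_mul, abs_of_pos hεpos]
      have h2 : ε * (|μ g| + 1) ≤ |ℓ₀ g| := by
        rw [← le_div_iff₀ (by positivity)]
        exact hle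
      nlinarith [abs_nonneg (μ g)]
    obtain ⟨hl, hr⟩ := abs_lt.1 hlt
    have happ : (ℓ₀ + ε • μ) g = ℓ₀ g + ε * μ g := by simp
    rcases lt_or_gt_of_ne hg0 with hneg | hpos
    · have : |ℓ₀ g| = -(ℓ₀ g) := abs_of_neg hneg
      constructor
      · rw [happ]; constructor <;> intro <;> linarith
      · rw [happ]; intro hc; linarith
    · have : |ℓ₀ g| = ℓ₀ g := abs_of_pos hpos
      constructor
      · rw [happ]; constructor <;> intro <;> linarith
      · rw [happ]; intro hc; linarith

lemma uniqueMax_mem_extremePoints {d : ℕ} {P : Set (Fin d → ℝ)}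
    {ℓ : (Fin d → ℝ) →ₗ[ℝ] ℝ} {x : Fin d → ℝ}
    (hx : x ∈ P) (hmax : ∀ y ∈ P, y ≠ x → ℓ y < ℓ x) : x ∈ Set.extremePoints ℝ P := by
  refine ⟨hx, ?_⟩
  intro y hy z hz hseg
  obtain ⟨a, b, ha, hb, hab, hxy⟩ := hseg
  have key : a * ℓ y + b * ℓ z = ℓ x := by
    rw [← hxy]; simp
  have hy' : ℓ y ≤ ℓ x := by
    rcases eq_or_ne y x with rfl | h; · exact le_rfl
    · exact (hmax y hy h).le
  have hz' : ℓ z ≤ ℓ x := by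
    rcases eq_or_ne z x with rfl | h; · exact le_rfl
    · exact (hmax z hz h).le
  have hx1 : a * ℓ x + b * ℓ x = ℓ x := by rw [← add_mul, hab, one_mul]
  by_contra hc
  rcases (Or.inl hc : ¬y = x ∨ ¬z = x) with h | h
  · have h2 := mul_lt_mul_of_pos_left (hmax y hy h) ha
    have h3 := mul_le_mul_of_nonneg_left hz' hb.le
    linarith
  · have h2 := mul_lt_mul_of_pos_left (hmax z hz h) hb
    have h3 := mul_le_mul_of_nonneg_left hy' ha.le
    linarith

lemma linIndep_coeffs_zero {d : ℕ} {B : Finset (Fin d → ℝ)}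
    (hB : LinearIndependent ℝ (fun x : (B : Set (Fin d → ℝ)) => x.val))
    (f : (Fin d → ℝ) → ℝ) (h : ∑ g ∈ B, f g • g = 0) : ∀ g ∈ B, f g = 0 := by
  classical
  have hsum : ∑ i : (B : Set (Fin d → ℝ)), f i.val • i.val = 0 := by
    rw [← h]
    exact Finset.sum_coe_sort B (fun g => f g • g)
  intro g hg
  exact Fintype.linearIndependent_iff.1 hB (fun i => f i.val) hsum ⟨g, hg⟩

lemma vert_extreme {d : ℕ} (G : Finset (Fin d → ℝ)) (t : Fin d → ℝ)
    (ℓ : (Fin d → ℝ) →ₗ[ℝ] ℝ) (hℓ : ∀ g ∈ G, ℓ g ≠ 0) :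
    (t + ∑ g ∈ G, (if 0 < ℓ g then (1:ℝ) else 0) • g) ∈
      Set.extremePoints ℝ {x | ∃ c : (Fin d → ℝ) → ℝ,
        (∀ g, 0 ≤ c g ∧ c g ≤ 1) ∧ x = t + ∑ g ∈ G, c g • g} := by
  classical
  apply uniqueMax_mem_extremePoints (ℓ := ℓ)
  · exact ⟨fun g => if 0 < ℓ g then 1 else 0,
      fun g => by by_cases h : 0 < ℓ g <;> simp [h], rfl⟩
  · rintro y ⟨c, hc, rfl⟩ hne
    have hterm : ∀ g ∈ G, c g * ℓ g ≤ (if 0 < ℓ g then (1:ℝ) else 0) * ℓ g := by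
      intro g hg
      by_cases h : 0 < ℓ g
      · simp only [h, if_pos]
        nlinarith [(hc g).1, (hc g).2]
      · have hlt : ℓ g < 0 := lt_of_le_of_ne (not_lt.1 h) (hℓ g hg)
        simp only [h, if_neg, if_false, zero_mul]
        nlinarith [(hc g).1]
    have happ : ∀ c' : (Fin d → ℝ) → ℝ,
        ℓ (t + ∑ g ∈ G, c' g • g) = ℓ t + ∑ g ∈ G, c' g * ℓ g := by
      intro c'
      rw [map_add, map_sum]
      simp [smul_eq_mul]
    rcases lt_or_ge (ℓ (t + ∑ g ∈ G, c g • g))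
        (ℓ (t + ∑ g ∈ G, (if 0 < ℓ g then (1:ℝ) else 0) • g)) with hlt | hge
    · exact hlt
    · exfalso
      apply hne
      rw [happ, happ] at hge
      have hsumle : ∑ g ∈ G, c g * ℓ g ≤ ∑ g ∈ G, (if 0 < ℓ g then (1:ℝ) else 0) * ℓ g :=
        Finset.sum_le_sum hterm
      have heq := (Finset.sum_eq_sum_iff_of_le hterm).1 (le_antisymm hsumle (by linarith))
      congr 1
      apply Finset.sum_congr rfl
      intro g hg
      have h1 : c g = (if 0 < ℓ g then (1:ℝ) else 0) :=
        mul_right_cancel₀ (hℓ g hg) (heq g hg)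
      rw [h1]

set_option maxHeartbeats 1000000 in
lemma signs_exist {d : ℕ} {G : Finset (Fin d → ℝ)} {t : Fin d → ℝ}
    (hne : ∀ g ∈ G, g ≠ 0)
    (hnc : ∀ g ∈ G, ∀ h ∈ G, g ≠ h → ∀ r : ℝ, g ≠ r • h)
    (hHI : ∀ x ∈ Set.extremePoints ℝ {x : Fin d → ℝ | ∃ c : (Fin d → ℝ) → ℝ,
        (∀ g, 0 ≤ c g ∧ c g ≤ 1) ∧ x = t + ∑ g ∈ G, c g • g},
      ∀ i, x i = 0 ∨ x i = 1/2 ∨ x i = 1)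
    (hdep : ¬ LinearIndependent ℝ (fun x : (G : Set (Fin d → ℝ)) => x.val))
    (hindep : ∀ B : Finset (Fin d → ℝ), B ⊂ G →
      LinearIndependent ℝ (fun x : (B : Set (Fin d → ℝ)) => x.val)) :
    ∃ ε : (Fin d → ℝ) → ℝ, (∀ g ∈ G, ε g = 1 ∨ ε g = -1) ∧
      (∑ g ∈ G, ε g • g = 0) ∧ G.Nonempty := by
  classical
  -- vertex coordinate values
  have hvert : ∀ ℓ : (Fin d → ℝ) →ₗ[ℝ] ℝ, (∀ g ∈ G, ℓ g ≠ 0) → ∀ j,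
      t j + ∑ g ∈ G, (if 0 < ℓ g then (1:ℝ) else 0) * g j = 0 ∨
      t j + ∑ g ∈ G, (if 0 < ℓ g then (1:ℝ) else 0) * g j = 1/2 ∨
      t j + ∑ g ∈ G, (if 0 < ℓ g then (1:ℝ) else 0) * g j = 1 := by
    intro ℓ hℓ j
    have h := hHI _ (vert_extreme G t ℓ hℓ) j
    have hxj : (t + ∑ g ∈ G, (if 0 < ℓ g then (1:ℝ) else 0) • g) j
        = t j + ∑ g ∈ G, (if 0 < ℓ g then (1:ℝ) else 0) * g j := by
      simp only [Pi.add_apply, Finset.sum_apply, Pi.smul_apply, smul_eq_mul]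
    rw [hxj] at h
    exact h
  -- the dependence
  obtain ⟨c, hcne, hcsum, hGne⟩ : ∃ c : (Fin d → ℝ) → ℝ,
      (∀ g ∈ G, c g ≠ 0) ∧ (∑ g ∈ G, c g • g = 0) ∧ G.Nonempty := by
    obtain ⟨f, hf0, i₀, hi₀⟩ := Fintype.not_linearIndependent_iff.1 hdep
    set c : (Fin d → ℝ) → ℝ := fun g => if h : g ∈ G then f ⟨g, h⟩ else 0 with hcdef
    have hc_eq : ∀ i : (G : Set (Fin d → ℝ)), c i.val = f i := by
      intro i
      have hiG : i.val ∈ G := Finset.mem_coe.1 i.2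
      simp only [hcdef]
      rw [dif_pos hiG]
    have hsum : ∑ g ∈ G, c g • g = 0 := by
      rw [← Finset.sum_coe_sort G (fun g => c g • g), ← hf0]
      exact Finset.sum_congr rfl (fun i _ => by rw [hc_eq i])
    refine ⟨c, ?_, hsum, ⟨i₀.val, i₀.2⟩⟩
    intro g₀ hg₀ hzero
    have hB : G.erase g₀ ⊂ G := Finset.erase_ssubset hg₀
    have hBi := hindep _ hB
    have hsum' : ∑ g ∈ G.erase g₀, c g • g = 0 := by
      have h2 := Finset.sum_erase_add G (fun g => c g • g) hg₀
      simp only [hzero, zero_smul, add_zero] at h2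
      rw [h2, hsum]
    have hz := linIndep_coeffs_zero hBi c hsum'
    apply hi₀
    rw [← hc_eq i₀]
    rcases eq_or_ne i₀.val g₀ with h | h
    · rw [h]; exact hzero
    · exact hz _ (Finset.mem_erase.2 ⟨h, i₀.2⟩)
  -- generator coordinates are in {0, ±1/2, ±1}
  have hgen : ∀ g₀ ∈ G, ∀ j, g₀ j = 0 ∨ g₀ j = 1/2 ∨ g₀ j = -(1/2) ∨ g₀ j = 1 ∨ g₀ j = -1 := by
    intro g₀ hg₀ j
    obtain ⟨μ, hμ0, hμ⟩ := nonvan_exists g₀ (G.erase g₀) (by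
      intro g hgmem r
      exact hnc g (Finset.mem_of_mem_erase hgmem) g₀ hg₀ (Finset.ne_of_mem_erase hgmem) r)
    obtain ⟨ν, -, hν⟩ := sep_exists 0 g₀ (by intro r; simpa using hne g₀ hg₀)
    obtain ⟨ε₁, hε₁, h₁⟩ := pert_exists G μ ν
    obtain ⟨ε₂, hε₂, h₂⟩ := pert_exists G μ (-ν)
    set ℓ₁ := μ + ε₁ • ν with hℓ₁def
    set ℓ₂ := μ + ε₂ • (-ν) with hℓ₂def
    have hμg : ∀ g ∈ G, g ≠ g₀ → μ g ≠ 0 :=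
      fun g hg hne' => hμ g (Finset.mem_erase.2 ⟨hne', hg⟩)
    have e₁ : ℓ₁ g₀ = ε₁ * ν g₀ := by simp [hℓ₁def, hμ0]
    have e₂ : ℓ₂ g₀ = -(ε₂ * ν g₀) := by simp [hℓ₂def, hμ0]
    have hℓ₁ : ∀ g ∈ G, ℓ₁ g ≠ 0 := by
      intro g hg
      rcases eq_or_ne g g₀ with rfl | hne'
      · rw [e₁]; exact mul_ne_zero (ne_of_gt hε₁) hν
      · exact (h₁ g hg (hμg g hg hne')).2
    have hℓ₂ : ∀ g ∈ G, ℓ₂ g ≠ 0 := by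
      intro g hg
      rcases eq_or_ne g g₀ with rfl | hne'
      · rw [e₂]; simpa using mul_ne_zero (ne_of_gt hε₂) hν
      · exact (h₂ g hg (hμg g hg hne')).2
    have hind : ∀ g ∈ G, g ≠ g₀ → ((0 < ℓ₁ g) ↔ (0 < ℓ₂ g)) := by
      intro g hg hne'
      rw [(h₁ g hg (hμg g hg hne')).1, (h₂ g hg (hμg g hg hne')).1]
    have v₁ := hvert ℓ₁ hℓ₁ j
    have v₂ := hvert ℓ₂ hℓ₂ j
    have hdiff : (∑ g ∈ G, (if 0 < ℓ₁ g then (1:ℝ) else 0) * g j)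
        - (∑ g ∈ G, (if 0 < ℓ₂ g then (1:ℝ) else 0) * g j)
        = ((if 0 < ℓ₁ g₀ then (1:ℝ) else 0) - (if 0 < ℓ₂ g₀ then (1:ℝ) else 0)) * g₀ j := by
      rw [← Finset.sum_sub_distrib]
      rw [Finset.sum_eq_single g₀]
      · ring
      · intro g hg hne'
        rw [if_congr (hind g hg hne') rfl rfl]; ring
      · intro h; exact absurd hg₀ h
    have hsign : (0 < ℓ₁ g₀ ∧ ¬ 0 < ℓ₂ g₀) ∨ (¬ 0 < ℓ₁ g₀ ∧ 0 < ℓ₂ g₀) := by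
      rcases lt_or_gt_of_ne hν with h | h
      · right
        constructor
        · rw [e₁]; push_neg; nlinarith
        · rw [e₂]; nlinarith
      · left
        constructor
        · rw [e₁]; nlinarith
        · rw [e₂]; push_neg; nlinarith
    have hg' : g₀ j = (t j + ∑ g ∈ G, (if 0 < ℓ₁ g then (1:ℝ) else 0) * g j)
          - (t j + ∑ g ∈ G, (if 0 < ℓ₂ g then (1:ℝ) else 0) * g j) ∨
        g₀ j = (t j + ∑ g ∈ G, (if 0 < ℓ₂ g then (1:ℝ) else 0) * g j)
          - (t j + ∑ g ∈ G, (if 0 < ℓ₁ g then (1:ℝ) else 0) * g j) := by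
      rcases hsign with ⟨hs1, hs2⟩ | ⟨hs1, hs2⟩
      · left
        rw [if_pos hs1, if_neg hs2] at hdiff
        rw [show (t j + ∑ g ∈ G, (if 0 < ℓ₁ g then (1:ℝ) else 0) * g j)
          - (t j + ∑ g ∈ G, (if 0 < ℓ₂ g then (1:ℝ) else 0) * g j)
          = (∑ g ∈ G, (if 0 < ℓ₁ g then (1:ℝ) else 0) * g j)
          - (∑ g ∈ G, (if 0 < ℓ₂ g then (1:ℝ) else 0) * g j) by ring, hdiff]
        ring
      · right
        rw [if_neg hs1, if_pos hs2] at hdiff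
        rw [show (t j + ∑ g ∈ G, (if 0 < ℓ₂ g then (1:ℝ) else 0) * g j)
          - (t j + ∑ g ∈ G, (if 0 < ℓ₁ g then (1:ℝ) else 0) * g j)
          = -((∑ g ∈ G, (if 0 < ℓ₁ g then (1:ℝ) else 0) * g j)
          - (∑ g ∈ G, (if 0 < ℓ₂ g then (1:ℝ) else 0) * g j)) by ring, hdiff]
        ring
    rcases v₁ with h1 | h1 | h1 <;> rcases v₂ with h2 | h2 | h2 <;>
      rcases hg' with e | e <;> rw [e, h1, h2] <;> norm_num
  -- width bound
  obtain ⟨μall, -, hμall⟩ := nonvan_exists 0 G (by intro g hg r; simpa using hne g hg)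
  have hwidth : ∀ j, ∑ g ∈ G, |g j| ≤ 1 := by
    intro j
    obtain ⟨ε₁, hε₁, h₁⟩ := pert_exists G (LinearMap.proj j) μall
    obtain ⟨ε₂, hε₂, h₂⟩ := pert_exists G (-LinearMap.proj j) μall
    set ℓ₁ := LinearMap.proj j + ε₁ • μall with hℓ₁def
    set ℓ₂ := -LinearMap.proj j + ε₂ • μall with hℓ₂def
    have hproj : ∀ g : Fin d → ℝ,
        (LinearMap.proj j : (Fin d → ℝ) →ₗ[ℝ] ℝ) g = g j := fun g => rfl
    have hℓ₁ : ∀ g ∈ G, ℓ₁ g ≠ 0 := by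
      intro g hg
      by_cases hgj : g j = 0
      · have : ℓ₁ g = ε₁ * μall g := by
          simp [hℓ₁def, hproj, hgj]
        rw [this]; exact mul_ne_zero (ne_of_gt hε₁) (hμall g hg)
      · exact (h₁ g hg (by rw [hproj]; exact hgj)).2
    have hℓ₂ : ∀ g ∈ G, ℓ₂ g ≠ 0 := by
      intro g hg
      by_cases hgj : g j = 0
      · have : ℓ₂ g = ε₂ * μall g := by
          simp [hℓ₂def, hproj, hgj]
        rw [this]; exact mul_ne_zero (ne_of_gt hε₂) (hμall g hg)
      · exact (h₂ g hg (by simp [hproj, hgj])).2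
    have hval₁ : ∑ g ∈ G, (if 0 < ℓ₁ g then (1:ℝ) else 0) * g j = ∑ g ∈ G, max (g j) 0 := by
      apply Finset.sum_congr rfl
      intro g hg
      rcases lt_trichotomy (g j) 0 with h | h | h
      · have hni : ¬ 0 < ℓ₁ g := by
          rw [(h₁ g hg (by rw [hproj]; exact ne_of_lt h)).1, hproj]
          exact not_lt.2 h.le
        rw [if_neg hni, max_eq_right h.le, zero_mul]
      · rw [h, mul_zero, max_self]
      · have hi : 0 < ℓ₁ g := by
          rw [(h₁ g hg (by rw [hproj]; exact ne_of_gt h)).1, hproj]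
          exact h
        rw [if_pos hi, max_eq_left h.le, one_mul]
    have hval₂ : ∑ g ∈ G, (if 0 < ℓ₂ g then (1:ℝ) else 0) * g j = ∑ g ∈ G, min (g j) 0 := by
      apply Finset.sum_congr rfl
      intro g hg
      have hproj2 : (-LinearMap.proj j : (Fin d → ℝ) →ₗ[ℝ] ℝ) g = -(g j) := by
        rw [LinearMap.neg_apply, hproj]
      rcases lt_trichotomy (g j) 0 with h | h | h
      · have hi : 0 < ℓ₂ g := by
          rw [(h₂ g hg (by rw [hproj2]; simpa using ne_of_lt h)).1, hproj2]
          linarith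
        rw [if_pos hi, min_eq_left h.le, one_mul]
      · rw [h, mul_zero, min_self]
      · have hni : ¬ 0 < ℓ₂ g := by
          rw [(h₂ g hg (by rw [hproj2]; simpa using ne_of_gt h)).1, hproj2]
          linarith
        rw [if_neg hni, min_eq_right h.le, zero_mul]
    have htop := hvert ℓ₁ hℓ₁ j
    have hbot := hvert ℓ₂ hℓ₂ j
    rw [hval₁] at htop
    rw [hval₂] at hbot
    have hsplit : ∑ g ∈ G, |g j| = (∑ g ∈ G, max (g j) 0) - ∑ g ∈ G, min (g j) 0 := by
      rw [← Finset.sum_sub_distrib]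
      apply Finset.sum_congr rfl
      intro g _
      rcases le_total (g j) 0 with h | h
      · rw [max_eq_right h, min_eq_left h, abs_of_nonpos h]; ring
      · rw [max_eq_left h, min_eq_right h, abs_of_nonneg h]; ring
    rw [hsplit]
    rcases htop with h | h | h <;> rcases hbot with h' | h' | h' <;> linarith
  -- nonzero coordinates have absolute value at least 1/2
  have hhalf : ∀ g ∈ G, ∀ j, g j ≠ 0 → 1/2 ≤ |g j| := by
    intro g hg j hj
    rcases hgen g hg j with h | h | h | h | h
    · exact absurd h hj
    · rw [h, abs_of_pos (by norm_num : (0:ℝ) < 1/2)]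
    · rw [h, abs_neg, abs_of_pos (by norm_num : (0:ℝ) < 1/2)]
    · rw [h, abs_of_pos one_pos]; norm_num
    · rw [h, abs_neg, abs_of_pos one_pos]; norm_num
  -- coordinate form of the dependence
  have hcoord : ∀ j, ∑ g ∈ G, c g * g j = 0 := by
    intro j
    have h := congrFun hcsum j
    simpa [Finset.sum_apply, smul_eq_mul] using h
  -- every nonzero coordinate has a partner
  have hpartner : ∀ j : Fin d, ∀ g₀ ∈ G, g₀ j ≠ 0 → ∃ h ∈ G, h ≠ g₀ ∧ h j ≠ 0 := by
    intro j g₀ hg₀ hgj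
    by_contra hcon
    push_neg at hcon
    have hsingle : ∑ g ∈ G, c g * g j = c g₀ * g₀ j := by
      rw [Finset.sum_eq_single g₀]
      · intro g hg hne'
        rw [hcon g hg hne', mul_zero]
      · intro h; exact absurd hg₀ h
    rw [hcoord j] at hsingle
    exact (mul_ne_zero (hcne g₀ hg₀) hgj) hsingle.symm
  -- if two generators are nonzero at j then all others vanish at j
  have hkey : ∀ j : Fin d, ∀ g₀ h, g₀ ∈ G → h ∈ G → g₀ ≠ h → g₀ j ≠ 0 → h j ≠ 0 →
      ∀ g ∈ G, g ≠ g₀ → g ≠ h → g j = 0 := by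
    intro j g₀ h hg₀ hh hneq hj₀ hjh g hg hgg₀ hgh
    by_contra hgj
    have hmem : g ∉ ({g₀, h} : Finset (Fin d → ℝ)) := by
      simp [hgg₀, hgh]
    have hmem2 : g₀ ∉ ({h} : Finset (Fin d → ℝ)) := by simp [hneq]
    have hsub : ({g, g₀, h} : Finset (Fin d → ℝ)) ⊆ G := by
      intro x hx
      simp only [Finset.mem_insert, Finset.mem_singleton] at hx
      rcases hx with rfl | rfl | rfl <;> assumption
    have hs3 : ∑ g' ∈ ({g, g₀, h} : Finset (Fin d → ℝ)), |g' j| ≤ ∑ g' ∈ G, |g' j| :=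
      Finset.sum_le_sum_of_subset_of_nonneg hsub (fun _ _ _ => abs_nonneg _)
    rw [Finset.sum_insert hmem, Finset.sum_insert hmem2, Finset.sum_singleton] at hs3
    have h1 := hhalf g₀ hg₀ j hj₀
    have h2 := hhalf h hh j hjh
    have h3 := hhalf g hg j hgj
    have h4 := hwidth j
    linarith
  -- equal absolute coefficient values for partners
  have habs2 : ∀ j : Fin d, ∀ g₀ h, g₀ ∈ G → h ∈ G → g₀ ≠ h → g₀ j ≠ 0 → h j ≠ 0 →
      |c g₀| = |c h| := by
    intro j g₀ h hg₀ hh hneq hj₀ hjh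
    have hz := hkey j g₀ h hg₀ hh hneq hj₀ hjh
    have hmem2 : g₀ ∉ ({h} : Finset (Fin d → ℝ)) := by simp [hneq]
    have hpairsub : ({g₀, h} : Finset (Fin d → ℝ)) ⊆ G := by
      intro x hx
      simp only [Finset.mem_insert, Finset.mem_singleton] at hx
      rcases hx with rfl | rfl <;> assumption
    have habsj : |g₀ j| = 1/2 ∧ |h j| = 1/2 := by
      have h1 := hhalf g₀ hg₀ j hj₀
      have h2 := hhalf h hh j hjh
      have hs2 : ∑ g' ∈ ({g₀, h} : Finset (Fin d → ℝ)), |g' j| ≤ ∑ g' ∈ G, |g' j| :=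
        Finset.sum_le_sum_of_subset_of_nonneg hpairsub (fun _ _ _ => abs_nonneg _)
      rw [Finset.sum_insert hmem2, Finset.sum_singleton] at hs2
      have h4 := hwidth j
      constructor <;> linarith
    have hred : c g₀ * g₀ j + c h * h j = 0 := by
      have hss : ∑ g' ∈ ({g₀, h} : Finset (Fin d → ℝ)), c g' * g' j
          = ∑ g' ∈ G, c g' * g' j := by
        apply Finset.sum_subset hpairsub
        intro g' hg' hnot
        simp only [Finset.mem_insert, Finset.mem_singleton] at hnot
        push_neg at hnot
        rw [hz g' hg' hnot.1 hnot.2, mul_zero]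
      rw [Finset.sum_insert hmem2, Finset.sum_singleton] at hss
      rw [hss, hcoord j]
    have heqm : |c g₀| * |g₀ j| = |c h| * |h j| := by
      rw [← abs_mul, ← abs_mul]
      have : c g₀ * g₀ j = -(c h * h j) := by linarith
      rw [this, abs_neg]
    rw [habsj.1, habsj.2] at heqm
    linarith
  -- constancy of |c| over G
  obtain ⟨gs, hgs⟩ := hGne
  set m := |c gs| with hm
  have hmpos : 0 < m := abs_pos.2 (hcne gs hgs)
  set A := G.filter (fun g => |c g| = m) with hA
  have hAsub : A ⊆ G := Finset.filter_subset _ _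
  have hgsA : gs ∈ A := Finset.mem_filter.2 ⟨hgs, rfl⟩
  have hAsum : ∑ g ∈ A, c g • g = 0 := by
    funext j
    simp only [Finset.sum_apply, Pi.smul_apply, smul_eq_mul, Pi.zero_apply]
    by_cases hall : ∀ g ∈ A, g j = 0
    · exact Finset.sum_eq_zero (fun g hg => by rw [hall g hg, mul_zero])
    · push_neg at hall
      obtain ⟨g₀, hg₀A, hg₀j⟩ := hall
      have hg₀G : g₀ ∈ G := hAsub hg₀A
      obtain ⟨h, hhG, hhne, hhj⟩ := hpartner j g₀ hg₀G hg₀j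
      have hg₀h : g₀ ≠ h := Ne.symm hhne
      have hg₀m : |c g₀| = m := (Finset.mem_filter.1 hg₀A).2
      have hhm : |c h| = m := by
        rw [← habs2 j g₀ h hg₀G hhG hg₀h hg₀j hhj]; exact hg₀m
      have hhA : h ∈ A := Finset.mem_filter.2 ⟨hhG, hhm⟩
      have hzg := hkey j g₀ h hg₀G hhG hg₀h hg₀j hhj
      have hmem2 : g₀ ∉ ({h} : Finset (Fin d → ℝ)) := by simp [hg₀h]
      have hpairA : ({g₀, h} : Finset (Fin d → ℝ)) ⊆ A := by
        intro x hx
        simp only [Finset.mem_insert, Finset.mem_singleton] at hx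
        rcases hx with rfl | rfl <;> assumption
      have hpairG : ({g₀, h} : Finset (Fin d → ℝ)) ⊆ G := fun x hx => hAsub (hpairA hx)
      have e1 : ∑ g ∈ ({g₀, h} : Finset (Fin d → ℝ)), c g * g j = ∑ g ∈ A, c g * g j := by
        apply Finset.sum_subset hpairA
        intro g' hg' hnot
        simp only [Finset.mem_insert, Finset.mem_singleton] at hnot
        push_neg at hnot
        rw [hzg g' (hAsub hg') hnot.1 hnot.2, mul_zero]
      have e2 : ∑ g ∈ ({g₀, h} : Finset (Fin d → ℝ)), c g * g j = ∑ g ∈ G, c g * g j := by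
        apply Finset.sum_subset hpairG
        intro g' hg' hnot
        simp only [Finset.mem_insert, Finset.mem_singleton] at hnot
        push_neg at hnot
        rw [hzg g' hg' hnot.1 hnot.2, mul_zero]
      rw [← e1, e2, hcoord j]
  have hAG : A = G := by
    by_contra hne'
    have hss : A ⊂ G := lt_of_le_of_ne hAsub hne'
    have hli := hindep A hss
    exact hcne gs hgs (linIndep_coeffs_zero hli c hAsum gs hgsA)
  have hcabs : ∀ g ∈ G, |c g| = m := by
    intro g hg
    rw [← hAG] at hg
    exact (Finset.mem_filter.1 hg).2
  refine ⟨fun g => c g / m, ?_, ?_, ⟨gs, hgs⟩⟩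
  · intro g hg
    rcases (abs_eq (le_of_lt hmpos)).1 (hcabs g hg) with h | h
    · left; show c g / m = 1; rw [h]; field_simp
    · right; show c g / m = -1; rw [h]; field_simp
  · have hfac : ∑ g ∈ G, (c g / m) • g = m⁻¹ • ∑ g ∈ G, c g • g := by
      rw [Finset.smul_sum]
      apply Finset.sum_congr rfl
      intro g _
      rw [smul_smul, div_eq_inv_mul]
    rw [hfac, hcsum, smul_zero]

set_option maxHeartbeats 1000000 in
lemma construction {d n : ℕ} (G : Finset (Fin d → ℝ)) (t : Fin d → ℝ)
    (hn : G.card = n)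
    (hindep : ∀ B : Finset (Fin d → ℝ), B ⊂ G →
      LinearIndependent ℝ (fun x : (B : Set (Fin d → ℝ)) => x.val))
    (ε : (Fin d → ℝ) → ℝ) (hε : ∀ g ∈ G, ε g = 1 ∨ ε g = -1)
    (hsum : ∑ g ∈ G, ε g • g = 0) (hGne : G.Nonempty) :
    ∃ T : (Fin n → ℝ) →ᵃ[ℝ] (Fin d → ℝ),
      Set.InjOn T (cycleZonotope n) ∧
      T '' cycleZonotope n = {x | ∃ c : (Fin d → ℝ) → ℝ,
        (∀ g, 0 ≤ c g ∧ c g ≤ 1) ∧ x = t + ∑ g ∈ G, c g • g} := by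
  classical
  have hnpos : 0 < n := by rw [← hn]; exact Finset.card_pos.2 hGne
  have hcard : Fintype.card (G : Set (Fin d → ℝ)) = n := by
    rw [← hn]; exact Fintype.card_coe G
  set σ : (G : Set (Fin d → ℝ)) ≃ Fin n := Fintype.equivFinOfCardEq hcard with hσ
  set gv : Fin n → (Fin d → ℝ) := fun i => (σ.symm i : Fin d → ℝ) with hgv
  have hgvG : ∀ i, gv i ∈ G := fun i => (σ.symm i).2
  have hgvinj : Function.Injective gv := fun i k h =>
    σ.symm.injective (Subtype.coe_injective h)
  have hreindex : ∀ F : (Fin d → ℝ) → (Fin d → ℝ),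
      ∑ i : Fin n, F (gv i) = ∑ g ∈ G, F g := by
    intro F
    rw [← Finset.sum_coe_sort G F]
    exact Equiv.sum_comp σ.symm (fun b => F b.val)
  set w : Fin n → (Fin d → ℝ) := fun i => ε (gv i) • gv i with hw
  have hwsum : ∑ i : Fin n, w i = 0 := by
    have h := hreindex (fun g => ε g • g)
    rw [hw]
    exact h.trans hsum
  set A : ℕ → (Fin d → ℝ) :=
    fun m => ∑ k ∈ Finset.univ.filter (fun k : Fin n => (k : ℕ) < m), w k with hA
  have hA0 : A 0 = 0 := by
    rw [hA]
    simp
  have hAn : A n = 0 := by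
    have hful : Finset.univ.filter (fun k : Fin n => (k : ℕ) < n) = Finset.univ := by
      apply Finset.filter_true_of_mem; intro k _; exact k.isLt
    rw [hA]
    simp only [hful]
    exact hwsum
  have hAsucc : ∀ (m : ℕ) (hm : m < n), A (m + 1) = A m + w ⟨m, hm⟩ := by
    intro m hm
    have hset : Finset.univ.filter (fun k : Fin n => (k : ℕ) < m + 1)
        = insert (⟨m, hm⟩ : Fin n) (Finset.univ.filter (fun k : Fin n => (k : ℕ) < m)) := by
      ext k
      simp only [Finset.mem_filter, Finset.mem_insert, Finset.mem_univ, true_and, Fin.ext_iff]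
      omega
    rw [hA]
    simp only [hset]
    rw [Finset.sum_insert (by simp)]
    abel
  set a : Fin n → (Fin d → ℝ) := fun i => A i.val with ha
  have hstep : ∀ i, a (cycNext i) = a i + w i := by
    intro i
    by_cases h : (i : ℕ) + 1 < n
    · have hc : cycNext i = ⟨(i : ℕ) + 1, h⟩ := by rw [cycNext, dif_pos h]
      rw [hc]
      show A ((i : ℕ) + 1) = A i.val + w i
      rw [hAsucc i.val i.isLt]
    · have hc : cycNext i = ⟨0, i.pos⟩ := by rw [cycNext, dif_neg h]
      rw [hc]
      show A 0 = A i.val + w i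
      have hi : (i : ℕ) + 1 = n := by have := i.isLt; omega
      have h2 : A ((i : ℕ) + 1) = A n := by rw [hi]
      rw [hA0, ← hAn, ← h2, hAsucc i.val i.isLt]
  set L : (Fin n → ℝ) →ₗ[ℝ] (Fin d → ℝ) :=
    { toFun := fun x => ∑ i : Fin n, x i • a i,
      map_add' := by
        intro x y
        simp only [Pi.add_apply, add_smul]
        rw [Finset.sum_add_distrib],
      map_smul' := by
        intro r x
        simp only [Pi.smul_apply, smul_eq_mul, RingHom.id_apply]
        rw [Finset.smul_sum]
        exact Finset.sum_congr rfl (fun i _ => (mul_smul r (x i) (a i))) } with hL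
  have hLapp : ∀ x, L x = ∑ i : Fin n, x i • a i := fun x => rfl
  set D : Fin d → ℝ :=
    ∑ i ∈ Finset.univ.filter (fun i : Fin n => ε (gv i) = -1), gv i with hD
  set b : Fin d → ℝ := t + D - (∑ i : Fin n, a i) with hb
  set T : (Fin n → ℝ) →ᵃ[ℝ] (Fin d → ℝ) :=
    { toFun := fun x => L x + b,
      linear := L,
      map_vadd' := by
        intro p v
        show L (v + p) + b = L v + (L p + b)
        rw [map_add]
        abel } with hT
  have hTapp : ∀ x, T x = L x + b := fun x => rfl
  have hLE : ∀ i, L (Pi.single i (1 : ℝ)) = a i := by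
    intro i
    rw [hLapp, Finset.sum_eq_single i]
    · rw [Pi.single_eq_same, one_smul]
    · intro k _ hk
      rw [Pi.single_eq_of_ne hk, zero_smul]
    · intro h; exact absurd (Finset.mem_univ i) h
  have hmemcyc : ∀ x, x ∈ cycleZonotope n ↔ ∃ c : Fin n → ℝ,
      (∀ i, 0 ≤ c i ∧ c i ≤ 1) ∧
      x = ∑ i : Fin n, ((1 - c i) • (Pi.single i (1:ℝ) : Fin n → ℝ) + c i • (Pi.single (cycNext i) (1:ℝ) : Fin n → ℝ)) := by
    intro x
    rw [cycleZonotope, Set.mem_fintype_sum]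
    constructor
    · rintro ⟨z, hz, rfl⟩
      have hch : ∀ i, ∃ ci : ℝ, (0 ≤ ci ∧ ci ≤ 1) ∧
          z i = ((1 - ci) • (Pi.single i (1:ℝ) : Fin n → ℝ) + ci • (Pi.single (cycNext i) (1:ℝ) : Fin n → ℝ)) := by
        intro i
        have hzi := hz i
        rw [segment_eq_image] at hzi
        obtain ⟨θ, hθ, he⟩ := hzi
        exact ⟨θ, Set.mem_Icc.1 hθ, he.symm⟩
      choose cc h1 h2 using hch
      exact ⟨cc, h1, (Finset.sum_congr rfl (fun i _ => h2 i))⟩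
    · rintro ⟨c, hc, rfl⟩
      refine ⟨fun i => ((1 - c i) • (Pi.single i (1:ℝ) : Fin n → ℝ) + c i • (Pi.single (cycNext i) (1:ℝ) : Fin n → ℝ)),
        fun i => ?_, rfl⟩
      rw [segment_eq_image]
      exact ⟨c i, Set.mem_Icc.2 ⟨(hc i).1, (hc i).2⟩, rfl⟩
  set X : (Fin n → ℝ) → (Fin n → ℝ) := fun c =>
    ∑ i : Fin n, ((1 - c i) • (Pi.single i (1:ℝ) : Fin n → ℝ) + c i • (Pi.single (cycNext i) (1:ℝ) : Fin n → ℝ)) with hX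
  set flp : (Fin n → ℝ) → (Fin n → ℝ) :=
    fun c i => if ε (gv i) = -1 then 1 - c i else c i with hflp
  have hflpbound : ∀ c : Fin n → ℝ, (∀ i, 0 ≤ c i ∧ c i ≤ 1) →
      ∀ i, 0 ≤ flp c i ∧ flp c i ≤ 1 := by
    intro c hc i
    rw [hflp]
    simp only []
    by_cases h : ε (gv i) = -1
    · rw [if_pos h]
      constructor <;> linarith [(hc i).1, (hc i).2]
    · rw [if_neg h]
      exact hc i
  have hflpflp : ∀ c : Fin n → ℝ, flp (flp c) = c := by
    intro c
    funext i
    rw [hflp]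
    simp only []
    by_cases h : ε (gv i) = -1
    · rw [if_pos h, if_pos h]; ring
    · rw [if_neg h, if_neg h]
  have hTX : ∀ c : Fin n → ℝ, T (X c) = t + ∑ i : Fin n, flp c i • gv i := by
    intro c
    rw [hTapp]
    have hLX : L (X c) = (∑ i : Fin n, a i) + ∑ i : Fin n, c i • w i := by
      rw [hX, map_sum, ← Finset.sum_add_distrib]
      apply Finset.sum_congr rfl
      intro i _
      rw [map_add, map_smul, map_smul, hLE, hLE, hstep i]
      rw [smul_add, sub_smul, one_smul]
      abel
    rw [hLX, hb]
    have hDsum : D = ∑ i : Fin n, (if ε (gv i) = -1 then gv i else 0) := by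
      rw [hD, ← Finset.sum_filter]
    have hper : ∀ i : Fin n, (if ε (gv i) = -1 then gv i else 0) + c i • w i
        = flp c i • gv i := by
      intro i
      rw [hflp, hw]
      simp only []
      rcases hε (gv i) (hgvG i) with h | h
      · rw [h, one_smul]
        have hif : (if (1:ℝ) = -1 then 1 - c i else c i) = c i := by norm_num
        have hif0 : (if (1:ℝ) = -1 then gv i else 0) = 0 := by norm_num
        rw [hif, hif0, zero_add]
      · rw [h]
        have hif : (if (-1:ℝ) = -1 then 1 - c i else c i) = 1 - c i := if_pos rfl
        have hif0 : (if (-1:ℝ) = -1 then gv i else 0) = gv i := if_pos rfl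
        rw [hif, hif0, sub_smul, one_smul, smul_smul]
        rw [show c i * (-1 : ℝ) = -(c i) by ring, neg_smul]
        abel
    have : D + ∑ i : Fin n, c i • w i = ∑ i : Fin n, flp c i • gv i := by
      rw [hDsum, ← Finset.sum_add_distrib]
      exact Finset.sum_congr rfl (fun i _ => hper i)
    rw [← this]
    abel
  have hsub : ∀ i : Fin n, (⟨gv i, hgvG i⟩ : (G : Set (Fin d → ℝ))) = σ.symm i :=
    fun i => Subtype.ext rfl
  refine ⟨T, ?_, ?_⟩
  · -- injectivity
    have hsumcoord : ∀ y ∈ cycleZonotope n, ∑ j : Fin n, y j = (n : ℝ) := by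
      intro y hy
      obtain ⟨c, hc, rfl⟩ := (hmemcyc y).1 hy
      have hrow : ∀ i : Fin n, ∑ j : Fin n,
          ((1 - c i) • (Pi.single i (1:ℝ) : Fin n → ℝ) + c i • (Pi.single (cycNext i) (1:ℝ) : Fin n → ℝ)) j = 1 := by
        intro i
        simp only [Pi.add_apply, Pi.smul_apply, smul_eq_mul]
        rw [Finset.sum_add_distrib, ← Finset.mul_sum, ← Finset.mul_sum]
        have h1 : ∑ j : Fin n, (Pi.single i (1:ℝ) : Fin n → ℝ) j = 1 := by
          simp [Pi.single_apply]
        have h2 : ∑ j : Fin n, (Pi.single (cycNext i) (1:ℝ) : Fin n → ℝ) j = 1 := by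
          simp [Pi.single_apply]
        rw [h1, h2]
        ring
      calc ∑ j : Fin n, (∑ i : Fin n,
            ((1 - c i) • (Pi.single i (1:ℝ) : Fin n → ℝ) + c i • (Pi.single (cycNext i) (1:ℝ) : Fin n → ℝ))) j
          = ∑ j : Fin n, ∑ i : Fin n,
            ((1 - c i) • (Pi.single i (1:ℝ) : Fin n → ℝ) + c i • (Pi.single (cycNext i) (1:ℝ) : Fin n → ℝ)) j := by
            apply Finset.sum_congr rfl
            intro j _
            rw [Finset.sum_apply]
        _ = ∑ i : Fin n, ∑ j : Fin n,
            ((1 - c i) • (Pi.single i (1:ℝ) : Fin n → ℝ) + c i • (Pi.single (cycNext i) (1:ℝ) : Fin n → ℝ)) j :=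
            Finset.sum_comm
        _ = ∑ i : Fin n, (1:ℝ) := Finset.sum_congr rfl (fun i _ => hrow i)
        _ = (n : ℝ) := by simp
    intro x hx y hy hTxy
    have hLxy : L x = L y := by
      have h1 : L x + b = L y + b := by
        rw [← hTapp, ← hTapp]
        exact hTxy
      exact add_right_cancel h1
    set u : Fin n → ℝ := x - y with hu
    have hL0 : L u = 0 := by rw [hu, map_sub, hLxy, sub_self]
    have hS0 : ∑ i : Fin n, u i = 0 := by
      rw [hu]
      simp only [Pi.sub_apply]
      rw [Finset.sum_sub_distrib, hsumcoord x hx, hsumcoord y hy, sub_self]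
    set S : Fin n → ℝ :=
      fun k => ∑ i ∈ Finset.univ.filter (fun i : Fin n => (k : ℕ) < (i : ℕ)), u i with hS
    have hLu : L u = ∑ k : Fin n, S k • w k := by
      rw [hLapp]
      have hterm : ∀ i : Fin n, u i • a i
          = ∑ k : Fin n, (if (k : ℕ) < (i : ℕ) then u i • w k else 0) := by
        intro i
        have hai : a i = ∑ k ∈ Finset.univ.filter (fun k : Fin n => (k : ℕ) < (i : ℕ)), w k := rfl
        rw [hai, Finset.smul_sum, Finset.sum_filter]
      rw [Finset.sum_congr rfl (fun i _ => hterm i), Finset.sum_comm]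
      apply Finset.sum_congr rfl
      intro k _
      rw [hS]
      rw [Finset.sum_smul, Finset.sum_filter]
    rw [hLu] at hL0
    set top : Fin n := ⟨n - 1, by omega⟩ with htopdef
    have hStop : S top = 0 := by
      rw [hS]
      apply Finset.sum_eq_zero
      intro i hi
      simp only [Finset.mem_filter, Finset.mem_univ, true_and] at hi
      exfalso
      have h1 := i.isLt
      have h2 : (top : ℕ) = n - 1 := rfl
      omega
    set B := G.erase (gv top) with hB
    have hBG : B ⊂ G := Finset.erase_ssubset (hgvG top)
    have hli := hindep B hBG
    set f : (Fin d → ℝ) → ℝ :=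
      fun g => if h : g ∈ G then S (σ ⟨g, h⟩) * ε g else 0 with hf
    have hfgv : ∀ k : Fin n, f (gv k) = S k * ε (gv k) := by
      intro k
      rw [hf]
      simp only []
      rw [dif_pos (hgvG k)]
      rw [show (⟨gv k, hgvG k⟩ : (G : Set (Fin d → ℝ))) = σ.symm k from Subtype.ext rfl]
      rw [Equiv.apply_symm_apply]
    have hfG : ∑ g ∈ G, f g • g = 0 := by
      rw [← hreindex (fun g => f g • g)]
      calc ∑ i : Fin n, f (gv i) • gv i = ∑ i : Fin n, S i • w i := by
            apply Finset.sum_congr rfl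
            intro i _
            rw [hfgv i, hw]
            simp only []
            rw [smul_smul]
        _ = 0 := hL0
    have hfsum : ∑ g ∈ B, f g • g = 0 := by
      have htopzero : f (gv top) • gv top = 0 := by
        rw [hfgv top, hStop, zero_mul, zero_smul]
      have hera := Finset.sum_erase_add G (fun g => f g • g) (hgvG top)
      rw [hB]
      have : (∑ g ∈ G.erase (gv top), f g • g) + f (gv top) • gv top = 0 := by
        rw [hera]; exact hfG
      rw [htopzero, add_zero] at this
      exact this
    have hfz := linIndep_coeffs_zero hli f hfsum
    have hSz : ∀ k : Fin n, S k = 0 := by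
      intro k
      rcases eq_or_ne k top with rfl | hk
      · exact hStop
      · have hgvk : gv k ∈ B := by
          rw [hB]
          exact Finset.mem_erase.2 ⟨fun e => hk (hgvinj e), hgvG k⟩
        have h0 := hfz (gv k) hgvk
        rw [hfgv k] at h0
        rcases hε (gv k) (hgvG k) with h | h <;> rw [h] at h0 <;> linarith
    have hu0 : u = 0 := by
      have hsum_ge : ∀ m : ℕ, m < n →
          ∑ i ∈ Finset.univ.filter (fun i : Fin n => m ≤ (i : ℕ)), u i = 0 := by
        intro m hm
        rcases Nat.eq_zero_or_pos m with rfl | hmpos'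
        · have hful : Finset.univ.filter (fun i : Fin n => 0 ≤ (i : ℕ)) = Finset.univ := by
            apply Finset.filter_true_of_mem
            intro i _
            omega
          rw [hful]
          exact hS0
        · obtain ⟨m', rfl⟩ : ∃ k, m = k + 1 := ⟨m - 1, by omega⟩
          have hfeq : Finset.univ.filter (fun i : Fin n => m' + 1 ≤ (i : ℕ))
              = Finset.univ.filter (fun i : Fin n => (m' : ℕ) < (i : ℕ)) := by
            apply Finset.filter_congr
            intro i _
            simp [Nat.succ_le_iff]
          rw [hfeq]
          have := hSz ⟨m', by omega⟩
          rw [hS] at this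
          exact this
      funext j
      show u j = 0
      have h1 : ∑ i ∈ Finset.univ.filter (fun i : Fin n => (j : ℕ) ≤ (i : ℕ)), u i = 0 :=
        hsum_ge j.val j.isLt
      have h2 : ∑ i ∈ Finset.univ.filter (fun i : Fin n => (j : ℕ) < (i : ℕ)), u i = 0 := by
        have := hSz j
        rw [hS] at this
        exact this
      have hins : Finset.univ.filter (fun i : Fin n => (j : ℕ) ≤ (i : ℕ))
          = insert j (Finset.univ.filter (fun i : Fin n => (j : ℕ) < (i : ℕ))) := by
        ext i
        simp only [Finset.mem_filter, Finset.mem_insert, Finset.mem_univ, true_and, Fin.ext_iff]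
        omega
      rw [hins, Finset.sum_insert (by simp)] at h1
      linarith
    have : x - y = 0 := hu0
    exact sub_eq_zero.1 this
  · -- image equality
    ext x
    constructor
    · rintro ⟨y, hy, rfl⟩
      obtain ⟨c, hc, rfl⟩ := (hmemcyc y).1 hy
      refine ⟨fun g => if h : g ∈ G then flp c (σ ⟨g, h⟩) else 0, ?_, ?_⟩
      · intro g
        dsimp only
        by_cases h : g ∈ G
        · rw [dif_pos h]
          exact hflpbound c hc _
        · rw [dif_neg h]
          norm_num
      · rw [show (∑ i : Fin n, ((1 - c i) • (Pi.single i (1:ℝ) : Fin n → ℝ)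
            + c i • (Pi.single (cycNext i) (1:ℝ) : Fin n → ℝ))) = X c from rfl]
        rw [hTX c]
        congr 1
        rw [← hreindex (fun g => (if h : g ∈ G then flp c (σ ⟨g, h⟩) else 0) • g)]
        apply Finset.sum_congr rfl
        intro i _
        rw [dif_pos (hgvG i), hsub i, Equiv.apply_symm_apply]
    · rintro ⟨c', hc', rfl⟩
      set cF : Fin n → ℝ := fun i => c' (gv i) with hcF
      refine ⟨X (flp cF), (hmemcyc _).2 ⟨flp cF, hflpbound cF (fun i => hc' (gv i)), rfl⟩, ?_⟩
      rw [hTX (flp cF), hflpflp cF]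
      congr 1
      rw [← hreindex (fun g => c' g • g)]

/-- main theorem -/
theorem halfIntegral_zonotope_minLinDep_is_cycle {d : ℕ} (Z : Set (Fin d → ℝ))
    (G : Finset (Fin d → ℝ)) (hZ : IsZonotopeWithGenerators Z G)
    (hHI : IsHalfIntegral Z) (hG : MinLinDep G) (n : ℕ) (hn : G.card = n) :
    ∃ T : (Fin n → ℝ) →ᵃ[ℝ] (Fin d → ℝ),
      Set.InjOn T (cycleZonotope n) ∧ T '' cycleZonotope n = Z := by
  classical
  obtain ⟨hne, hnc, t, hZt⟩ := hZ
  obtain ⟨hdep, hindep⟩ := hG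
  have hHI' : ∀ x ∈ Set.extremePoints ℝ {x : Fin d → ℝ | ∃ c : (Fin d → ℝ) → ℝ,
      (∀ g, 0 ≤ c g ∧ c g ≤ 1) ∧ x = t + ∑ g ∈ G, c g • g},
      ∀ i, x i = 0 ∨ x i = 1/2 ∨ x i = 1 := by
    rw [← hZt]
    exact hHI
  obtain ⟨ε, hε, hsum, hGne⟩ := signs_exist hne hnc hHI' hdep hindep
  obtain ⟨T, hinj, himg⟩ := construction G t hn hindep ε hε hsum hGne
  exact ⟨T, hinj, by rw [himg, hZt]⟩
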